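/- For any ν_1,…,ν_N ∈ ℂ and each j = 1,…,N, one has C(ν_j) B(ν_j − 1) |⇑⟩ = − a(ν_j) d(ν_j − 1) |⇑⟩, where a(λ) = ∏_{k=1}^N (λ − ν_k + 1) and d(λ) = ∏_{k=1}^N (λ − ν_k). (This is the action of the quantum determinant qdet T(ν_j) = D(ν_j)A(ν_j − 1) − C(ν_j)B(ν_j − 1) = a(ν_j) d(ν_j − 1)·Id on the vacuum, using a(ν_j − 1) = 0.) -/

import Mathlib

open scoped BigOperators
noncomputable section

namespace SixVertex

/-- A spin configuration of the `N`-site quantum chain: one spin (`0` = up, `1` = down)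
at each site. Site `k` of the paper (k = 1,…,N) corresponds to index `k-1 : Fin N`. -/
abbrev Cfg (N : ℕ) := Fin N → Fin 2

/-- Operators on the quantum space `H = (ℂ²)^{⊗N}`, represented as matrices in the
standard (spin-configuration) basis. -/
abbrev Op (N : ℕ) := Matrix (Cfg N) (Cfg N) ℂ

/-- The operator acting as the 2×2 matrix `M` in the `k`-th tensor factor and as the
identity elsewhere. -/
def siteOp {N : ℕ} (k : Fin N) (M : Matrix (Fin 2) (Fin 2) ℂ) : Op N :=
  Matrix.of fun s s' => if ∀ i, i ≠ k → s i = s' i then M (s k) (s' k) else 0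

def piPlus : Matrix (Fin 2) (Fin 2) ℂ := !![1, 0; 0, 0]
def piMinus : Matrix (Fin 2) (Fin 2) ℂ := !![0, 0; 0, 1]
def sigmaPlus : Matrix (Fin 2) (Fin 2) ℂ := !![0, 1; 0, 0]
def sigmaMinus : Matrix (Fin 2) (Fin 2) ℂ := !![0, 0; 1, 0]

/-- Rational weight `a(λ,ν) = λ - ν + 1`. -/
def aW (l v : ℂ) : ℂ := l - v + 1
/-- Rational weight `b(λ,ν) = λ - ν`. -/
def bW (l v : ℂ) : ℂ := l - v

/-- The L-operator at site `k` (a 2×2 matrix in the auxiliary space, with entries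
operators on the quantum space); the weight `c` equals `1`. -/
def Lop {N : ℕ} (ν : Fin N → ℂ) (k : Fin N) (l : ℂ) :
    Matrix (Fin 2) (Fin 2) (Op N) :=
  !![aW l (ν k) • siteOp k piPlus + bW l (ν k) • siteOp k piMinus,
       siteOp k sigmaMinus;
     siteOp k sigmaPlus,
       bW l (ν k) • siteOp k piPlus + aW l (ν k) • siteOp k piMinus]

/-- The monodromy matrix `T(λ) = L_N(λ,ν_N) ⋯ L_1(λ,ν_1)`. -/
def monodromy {N : ℕ} (ν : Fin N → ℂ) (l : ℂ) :
    Matrix (Fin 2) (Fin 2) (Op N) :=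
  (((List.finRange N).reverse).map fun k => Lop ν k l).prod

/-- The operator `A(λ)`. -/
def Aop {N : ℕ} (ν : Fin N → ℂ) (l : ℂ) : Op N := monodromy ν l 0 0
/-- The operator `B(λ)`. -/
def Bop {N : ℕ} (ν : Fin N → ℂ) (l : ℂ) : Op N := monodromy ν l 0 1
/-- The operator `C(λ)`. -/
def Cop {N : ℕ} (ν : Fin N → ℂ) (l : ℂ) : Op N := monodromy ν l 1 0
/-- The operator `D(λ)`. -/
def Dop {N : ℕ} (ν : Fin N → ℂ) (l : ℂ) : Op N := monodromy ν l 1 1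

/-- The all-spins-up configuration. -/
def upCfg (N : ℕ) : Cfg N := fun _ => 0
/-- The all-spins-down configuration. -/
def downCfg (N : ℕ) : Cfg N := fun _ => 1

/-- The basis vector of `H` corresponding to a spin configuration `s`. -/
def basisVec {N : ℕ} (s : Cfg N) : Cfg N → ℂ := Pi.single s 1

/-- The all-spins-up vacuum vector `|⇑⟩`. -/
def upVec (N : ℕ) : Cfg N → ℂ := basisVec (upCfg N)
/-- The all-spins-down vector `|⇓⟩`. -/
def downVec (N : ℕ) : Cfg N → ℂ := basisVec (downCfg N)

/-- The partition function of the six-vertex model with domain wall boundary conditions: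
`Z_N(λ_1,…,λ_N) = ⟨⇓| B(λ_N) ⋯ B(λ_1) |⇑⟩`. -/
def Zfun (N : ℕ) (ν : Fin N → ℂ) (lam : Fin N → ℂ) : ℂ :=
  (((List.finRange N).reverse).map fun j => Bop ν (lam j)).prod (downCfg N) (upCfg N)

end SixVertex
end
noncomputable section
namespace SixVertexAux
open SixVertex Matrix Function

variable {N : ℕ}

lemma fin2_cases (x : Fin 2) : x = 0 ∨ x = 1 := by omega

lemma siteOp_mulVec (k : Fin N) (M : Matrix (Fin 2) (Fin 2) ℂ) (v : Cfg N → ℂ) (s : Cfg N) :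
    (siteOp k M).mulVec v s =
      M (s k) 0 * v (update s k 0) + M (s k) 1 * v (update s k 1) := by
  classical
  have hne : update s k (0 : Fin 2) ≠ update s k 1 := by
    intro h
    have := congrFun h k
    simp [update_self] at this
  rw [Matrix.mulVec, dotProduct]
  rw [Fintype.sum_eq_add (update s k 0) (update s k 1) hne ?_]
  · have h0 : siteOp k M s (update s k 0) = M (s k) 0 := by
      simp only [siteOp, Matrix.of_apply]
      rw [if_pos]
      · rw [update_self]
      · intro i hi; rw [update_of_ne hi]
    have h1 : siteOp k M s (update s k 1) = M (s k) 1 := by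
      simp only [siteOp, Matrix.of_apply]
      rw [if_pos]
      · rw [update_self]
      · intro i hi; rw [update_of_ne hi]
    rw [h0, h1]
  · rintro c ⟨hc0, hc1⟩
    simp only [siteOp, Matrix.of_apply]
    rw [if_neg]
    · ring
    · intro hagree
      have hc : c = update s k (c k) := by
        funext i
        by_cases hi : i = k
        · subst hi; rw [update_self]
        · rw [update_of_ne hi, (hagree i hi).symm]
      rcases fin2_cases (c k) with h | h <;> rw [h] at hc
      · exact hc0 hc
      · exact hc1 hc

/-- `v` vanishes on configurations with spin down at `k`. -/
def upAt (k : Fin N) (v : Cfg N → ℂ) : Prop := ∀ s : Cfg N, s k = 1 → v s = 0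

lemma upAt_basis {k : Fin N} {s : Cfg N} (hs : s k = 0) : upAt k (basisVec s) := by
  intro t ht
  have : t ≠ s := fun h => by rw [h, hs] at ht; exact absurd ht (by simp)
  simp [basisVec, Pi.single_apply, this]

lemma upAt_zero (k : Fin N) : upAt k (0 : Cfg N → ℂ) := fun _ _ => rfl

lemma upAt_add {k : Fin N} {v w : Cfg N → ℂ} (hv : upAt k v) (hw : upAt k w) :
    upAt k (v + w) := fun s hs => by simp [hv s hs, hw s hs]

lemma upAt_smul {k : Fin N} {v : Cfg N → ℂ} (c : ℂ) (hv : upAt k v) :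
    upAt k (c • v) := fun s hs => by simp [hv s hs]

lemma piPlus_mulVec {k : Fin N} {v : Cfg N → ℂ} (h : upAt k v) :
    (siteOp k piPlus).mulVec v = v := by
  funext s
  rw [siteOp_mulVec]
  rcases fin2_cases (s k) with hs | hs <;> rw [hs]
  · have : update s k (0 : Fin 2) = s := by rw [← hs]; exact update_eq_self k s
    simp [piPlus, this]
  · rw [h s hs]
    simp [piPlus]

lemma piMinus_mulVec {k : Fin N} {v : Cfg N → ℂ} (h : upAt k v) :
    (siteOp k piMinus).mulVec v = 0 := by
  funext s
  rw [siteOp_mulVec]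
  rcases fin2_cases (s k) with hs | hs <;> rw [hs]
  · simp [piMinus]
  · have hu : update s k (1 : Fin 2) = s := by rw [← hs]; exact update_eq_self k s
    rw [hu, h s hs]
    simp [piMinus]

lemma sigmaPlus_mulVec {k : Fin N} {v : Cfg N → ℂ} (h : upAt k v) :
    (siteOp k sigmaPlus).mulVec v = 0 := by
  funext s
  rw [siteOp_mulVec]
  rcases fin2_cases (s k) with hs | hs <;> rw [hs]
  · have : v (update s k 1) = 0 := h _ (update_self k 1 s)
    simp [sigmaPlus, this]
  · simp [sigmaPlus]

lemma basis_apply (s t : Cfg N) : basisVec s t = if t = s then (1:ℂ) else 0 := by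
  simp [basisVec, Pi.single_apply]

lemma sigmaMinus_basis {k : Fin N} {s : Cfg N} (hs : s k = 0) :
    (siteOp k sigmaMinus).mulVec (basisVec s) = basisVec (update s k 1) := by
  funext t
  rw [siteOp_mulVec]
  rcases fin2_cases (t k) with ht | ht <;> rw [ht]
  · have : t ≠ update s k 1 := by
      intro h; rw [h, update_self] at ht; exact absurd ht (by simp)
    simp [sigmaMinus, basis_apply, this]
  · have hiff : update t k (0:Fin 2) = s ↔ t = update s k 1 := by
      constructor
      · intro h
        funext i
        by_cases hi : i = k
        · subst hi; rw [update_self, ht]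
        · rw [update_of_ne hi, ← h, update_of_ne hi]
      · intro h
        funext i
        by_cases hi : i = k
        · subst hi; rw [update_self, hs]
        · rw [update_of_ne hi, h, update_of_ne hi]
    simp only [sigmaMinus, basis_apply]
    rw [if_congr hiff rfl rfl]
    norm_num [Matrix.cons_val_zero, Matrix.cons_val_one]

lemma sigmaPlus_basis {k : Fin N} {s : Cfg N} (hs : s k = 1) :
    (siteOp k sigmaPlus).mulVec (basisVec s) = basisVec (update s k 0) := by
  funext t
  rw [siteOp_mulVec]
  rcases fin2_cases (t k) with ht | ht <;> rw [ht]
  · have hiff : update t k (1:Fin 2) = s ↔ t = update s k 0 := by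
      constructor
      · intro h
        funext i
        by_cases hi : i = k
        · subst hi; rw [update_self, ht]
        · rw [update_of_ne hi, ← h, update_of_ne hi]
      · intro h
        funext i
        by_cases hi : i = k
        · subst hi; rw [update_self, hs]
        · rw [update_of_ne hi, h, update_of_ne hi]
    simp only [sigmaPlus, basis_apply]
    rw [if_congr hiff rfl rfl]
    rcases em (t = update s k 0) with h | h <;> simp [h]
  · have : t ≠ update s k 0 := by
      intro h; rw [h, update_self] at ht; exact absurd ht (by simp)
    simp [sigmaPlus, basis_apply, this]


variable (ν : Fin N → ℂ)

def Pl (l : List (Fin N)) (lam : ℂ) : Matrix (Fin 2) (Fin 2) (Op N) :=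
  (l.map fun k => Lop ν k lam).prod

lemma Pl_nil (lam : ℂ) : Pl ν ([] : List (Fin N)) lam = 1 := rfl

lemma Pl_cons (k : Fin N) (t : List (Fin N)) (lam : ℂ) :
    Pl ν (k :: t) lam = Lop ν k lam * Pl ν t lam := by
  simp [Pl]

lemma Pl_cons_mulVec (k : Fin N) (t : List (Fin N)) (lam : ℂ) (α β : Fin 2) (v : Cfg N → ℂ) :
    (Pl ν (k :: t) lam α β).mulVec v =
      (Lop ν k lam α 0).mulVec ((Pl ν t lam 0 β).mulVec v) +
      (Lop ν k lam α 1).mulVec ((Pl ν t lam 1 β).mulVec v) := by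
  rw [Pl_cons, Matrix.mul_apply, Fin.sum_univ_two, Matrix.add_mulVec,
    Matrix.mulVec_mulVec, Matrix.mulVec_mulVec]

lemma Lop00 (k : Fin N) (lam : ℂ) :
    Lop ν k lam 0 0 = aW lam (ν k) • siteOp k piPlus + bW lam (ν k) • siteOp k piMinus := by
  simp [Lop]
lemma Lop01 (k : Fin N) (lam : ℂ) : Lop ν k lam 0 1 = siteOp k sigmaMinus := by
  simp [Lop]
lemma Lop10 (k : Fin N) (lam : ℂ) : Lop ν k lam 1 0 = siteOp k sigmaPlus := by
  simp [Lop]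
lemma Lop11 (k : Fin N) (lam : ℂ) :
    Lop ν k lam 1 1 = bW lam (ν k) • siteOp k piPlus + aW lam (ν k) • siteOp k piMinus := by
  simp [Lop]

lemma L00_mulVec {k : Fin N} (lam : ℂ) {v : Cfg N → ℂ} (h : upAt k v) :
    (Lop ν k lam 0 0).mulVec v = aW lam (ν k) • v := by
  rw [Lop00, Matrix.add_mulVec, Matrix.smul_mulVec, Matrix.smul_mulVec,
    piPlus_mulVec h, piMinus_mulVec h, smul_zero, add_zero]

lemma L11_mulVec {k : Fin N} (lam : ℂ) {v : Cfg N → ℂ} (h : upAt k v) :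
    (Lop ν k lam 1 1).mulVec v = bW lam (ν k) • v := by
  rw [Lop11, Matrix.add_mulVec, Matrix.smul_mulVec, Matrix.smul_mulVec,
    piPlus_mulVec h, piMinus_mulVec h, smul_zero, add_zero]

lemma L10_mulVec {k : Fin N} (lam : ℂ) {v : Cfg N → ℂ} (h : upAt k v) :
    (Lop ν k lam 1 0).mulVec v = 0 := by
  rw [Lop10, sigmaPlus_mulVec h]

lemma upAt_siteOp {k m : Fin N} (hk : k ≠ m) {M : Matrix (Fin 2) (Fin 2) ℂ}
    {v : Cfg N → ℂ} (h : upAt m v) : upAt m ((siteOp k M).mulVec v) := by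
  intro s hs
  rw [siteOp_mulVec]
  have h0 : v (update s k 0) = 0 := h _ (by rw [update_of_ne (Ne.symm hk) _ s]; exact hs)
  have h1 : v (update s k 1) = 0 := h _ (by rw [update_of_ne (Ne.symm hk) _ s]; exact hs)
  rw [h0, h1]; ring

lemma upAt_Lop {k m : Fin N} (hk : k ≠ m) (lam : ℂ) {v : Cfg N → ℂ} (h : upAt m v)
    (α β : Fin 2) : upAt m ((Lop ν k lam α β).mulVec v) := by
  rcases fin2_cases α with rfl | rfl <;> rcases fin2_cases β with rfl | rfl
  · rw [Lop00, Matrix.add_mulVec, Matrix.smul_mulVec, Matrix.smul_mulVec]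
    exact upAt_add (upAt_smul _ (upAt_siteOp hk h)) (upAt_smul _ (upAt_siteOp hk h))
  · rw [Lop01]; exact upAt_siteOp hk h
  · rw [Lop10]; exact upAt_siteOp hk h
  · rw [Lop11, Matrix.add_mulVec, Matrix.smul_mulVec, Matrix.smul_mulVec]
    exact upAt_add (upAt_smul _ (upAt_siteOp hk h)) (upAt_smul _ (upAt_siteOp hk h))

lemma upAt_Pl {m : Fin N} {t : List (Fin N)} (hm : m ∉ t) (lam : ℂ) {v : Cfg N → ℂ}
    (h : upAt m v) (α β : Fin 2) : upAt m ((Pl ν t lam α β).mulVec v) := by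
  induction t generalizing α β v with
  | nil =>
    rw [Pl_nil]
    rcases fin2_cases α with rfl | rfl <;> rcases fin2_cases β with rfl | rfl
    · rw [show (1 : Matrix (Fin 2) (Fin 2) (Op N)) 0 0 = (1 : Op N) from rfl, Matrix.one_mulVec]
      exact h
    · rw [show (1 : Matrix (Fin 2) (Fin 2) (Op N)) 0 1 = (0 : Op N) from rfl, Matrix.zero_mulVec]
      exact upAt_zero m
    · rw [show (1 : Matrix (Fin 2) (Fin 2) (Op N)) 1 0 = (0 : Op N) from rfl, Matrix.zero_mulVec]
      exact upAt_zero m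
    · rw [show (1 : Matrix (Fin 2) (Fin 2) (Op N)) 1 1 = (1 : Op N) from rfl, Matrix.one_mulVec]
      exact h
  | cons k t ih =>
    have hk : k ≠ m := fun hkm => hm (hkm ▸ (List.mem_cons_self (a := k) (l := t)))
    have hmt : m ∉ t := fun hmt => hm (List.mem_cons_of_mem _ hmt)
    rw [Pl_cons_mulVec]
    exact upAt_add (upAt_Lop ν hk lam (ih hmt h 0 β) α 0)
      (upAt_Lop ν hk lam (ih hmt h 1 β) α 1)

def aprodL (l : List (Fin N)) (lam : ℂ) : ℂ := (l.map fun k => aW lam (ν k)).prod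
def bprodL (l : List (Fin N)) (lam : ℂ) : ℂ := (l.map fun k => bW lam (ν k)).prod

lemma aprodL_nil (lam : ℂ) : aprodL ν ([] : List (Fin N)) lam = 1 := rfl
lemma bprodL_nil (lam : ℂ) : bprodL ν ([] : List (Fin N)) lam = 1 := rfl
lemma aprodL_cons (k : Fin N) (t : List (Fin N)) (lam : ℂ) :
    aprodL ν (k :: t) lam = aW lam (ν k) * aprodL ν t lam := by simp [aprodL]
lemma bprodL_cons (k : Fin N) (t : List (Fin N)) (lam : ℂ) :
    bprodL ν (k :: t) lam = bW lam (ν k) * bprodL ν t lam := by simp [bprodL]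

lemma AC_up (l : List (Fin N)) (lam : ℂ) {s : Cfg N} (hs : ∀ k ∈ l, s k = 0) :
    (Pl ν l lam 0 0).mulVec (basisVec s) = aprodL ν l lam • basisVec s ∧
    (Pl ν l lam 1 0).mulVec (basisVec s) = 0 := by
  induction l with
  | nil =>
    constructor
    · rw [show Pl ν ([] : List (Fin N)) lam 0 0 = (1 : Op N) from rfl, Matrix.one_mulVec,
        aprodL_nil, one_smul]
    · rw [show Pl ν ([] : List (Fin N)) lam 1 0 = (0 : Op N) from rfl, Matrix.zero_mulVec]
  | cons k t ih =>
    have hsk : s k = 0 := hs k ((List.mem_cons_self (a := k) (l := t)))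
    have hst : ∀ m ∈ t, s m = 0 := fun m hm => hs m (List.mem_cons_of_mem _ hm)
    obtain ⟨ihA, ihC⟩ := ih hst
    have hup : upAt k (basisVec s) := upAt_basis hsk
    constructor
    · rw [Pl_cons_mulVec, ihA, ihC, Matrix.mulVec_zero, add_zero, Matrix.mulVec_smul,
        L00_mulVec ν lam hup, aprodL_cons, smul_smul, mul_comm]
    · rw [Pl_cons_mulVec, ihA, ihC, Matrix.mulVec_zero, Matrix.mulVec_smul,
        L10_mulVec ν lam hup, smul_zero, zero_add]

def Bvec (lam : ℂ) (s : Cfg N) : List (Fin N) → (Cfg N → ℂ)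
  | [] => 0
  | k :: t => aW lam (ν k) • Bvec lam s t + bprodL ν t lam • basisVec (Function.update s k 1)

lemma upAt_Bvec {m : Fin N} {l : List (Fin N)} (hm : m ∉ l) (lam : ℂ) {s : Cfg N}
    (hs : s m = 0) : upAt m (Bvec ν lam s l) := by
  induction l with
  | nil => exact upAt_zero m
  | cons k t ih =>
    have hk : k ≠ m := fun hkm => hm (hkm ▸ (List.mem_cons_self (a := k) (l := t)))
    have hmt : m ∉ t := fun h => hm (List.mem_cons_of_mem _ h)
    refine upAt_add (upAt_smul _ (ih hmt)) (upAt_smul _ (upAt_basis ?_))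
    rw [Function.update_of_ne (Ne.symm hk)]
    exact hs

lemma BD_up (l : List (Fin N)) (lam : ℂ) {s : Cfg N} (hnd : l.Nodup)
    (hs : ∀ k ∈ l, s k = 0) :
    (Pl ν l lam 0 1).mulVec (basisVec s) = Bvec ν lam s l ∧
    (Pl ν l lam 1 1).mulVec (basisVec s) = bprodL ν l lam • basisVec s := by
  induction l with
  | nil =>
    constructor
    · rw [show Pl ν ([] : List (Fin N)) lam 0 1 = (0 : Op N) from rfl, Matrix.zero_mulVec]
      rfl
    · rw [show Pl ν ([] : List (Fin N)) lam 1 1 = (1 : Op N) from rfl, Matrix.one_mulVec,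
        bprodL_nil, one_smul]
  | cons k t ih =>
    have hsk : s k = 0 := hs k ((List.mem_cons_self (a := k) (l := t)))
    have hst : ∀ m ∈ t, s m = 0 := fun m hm => hs m (List.mem_cons_of_mem _ hm)
    have hkt : k ∉ t := (List.nodup_cons.mp hnd).1
    obtain ⟨ihB, ihD⟩ := ih (List.nodup_cons.mp hnd).2 hst
    have hup : upAt k (basisVec s) := upAt_basis hsk
    have hupB : upAt k (Bvec ν lam s t) := upAt_Bvec ν hkt lam hsk
    constructor
    · rw [Pl_cons_mulVec, ihB, ihD, Matrix.mulVec_smul, L00_mulVec ν lam hupB,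
        Lop01, sigmaMinus_basis hsk]
      rfl
    · rw [Pl_cons_mulVec, ihB, ihD, Matrix.mulVec_smul, L10_mulVec ν lam hupB,
        L11_mulVec ν lam hup, zero_add, smul_smul, bprodL_cons, mul_comm]

def cb (i : Fin N) (μ : ℂ) : List (Fin N) → ℂ
  | [] => 0
  | k :: t => if k = i then aprodL ν t μ else bW μ (ν k) * cb i μ t

lemma C_flip (l : List (Fin N)) (μ : ℂ) {s : Cfg N} {i : Fin N} (hnd : l.Nodup)
    (hi : i ∈ l) (hs : ∀ k ∈ l, s k = 0) :
    (Pl ν l μ 1 0).mulVec (basisVec (Function.update s i 1)) = cb ν i μ l • basisVec s := by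
  induction l with
  | nil => exact absurd hi List.not_mem_nil
  | cons k t ih =>
    have hsk : s k = 0 := hs k ((List.mem_cons_self (a := k) (l := t)))
    have hst : ∀ m ∈ t, s m = 0 := fun m hm => hs m (List.mem_cons_of_mem _ hm)
    have hkt : k ∉ t := (List.nodup_cons.mp hnd).1
    have hndt := (List.nodup_cons.mp hnd).2
    by_cases hk : k = i
    · subst hk
      -- i = k head, k ∉ t
      have hst' : ∀ m ∈ t, (Function.update s k 1) m = 0 := by
        intro m hm
        rw [Function.update_of_ne (fun h => hkt (by rw [← h]; exact hm))]
        exact hst m hm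
      obtain ⟨hA, hC⟩ := AC_up ν t μ hst'
      rw [Pl_cons_mulVec, hA, hC, Matrix.mulVec_zero, add_zero, Matrix.mulVec_smul,
        Lop10, sigmaPlus_basis (Function.update_self k 1 s)]
      have : Function.update (Function.update s k 1) k (0:Fin 2) = s := by
        rw [Function.update_idem, ← hsk, Function.update_eq_self]
      rw [this, cb]
      simp
    · have hit : i ∈ t := by
        rcases List.mem_cons.mp hi with h | h
        · exact absurd h.symm hk
        · exact h
      have hupw : upAt k (basisVec (Function.update s i 1)) := by
        apply upAt_basis
        rw [Function.update_of_ne (fun h : k = i => hk h)]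
        exact hsk
      have hupA : upAt k ((Pl ν t μ 0 0).mulVec (basisVec (Function.update s i 1))) :=
        upAt_Pl ν hkt μ hupw 0 0
      rw [Pl_cons_mulVec, ih hndt hit hst, L10_mulVec ν μ hupA, zero_add,
        Matrix.mulVec_smul, L11_mulVec ν μ (upAt_basis hsk), smul_smul, cb]
      rw [if_neg hk, mul_comm]

def Sval (lam μ : ℂ) : List (Fin N) → ℂ
  | [] => 0
  | k :: t => aW lam (ν k) * (bW μ (ν k) * Sval lam μ t) + bprodL ν t lam * aprodL ν t μ

lemma key (l : List (Fin N)) (lam μ : ℂ) {s : Cfg N} (hnd : l.Nodup)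
    (hs : ∀ k ∈ l, s k = 0) :
    (Pl ν l μ 1 0).mulVec (Bvec ν lam s l) = Sval ν lam μ l • basisVec s := by
  induction l with
  | nil =>
    show (Pl ν ([] : List (Fin N)) μ 1 0).mulVec 0 = _
    rw [Matrix.mulVec_zero, Sval, zero_smul]
  | cons k t ih =>
    have hsk : s k = 0 := hs k ((List.mem_cons_self (a := k) (l := t)))
    have hst : ∀ m ∈ t, s m = 0 := fun m hm => hs m (List.mem_cons_of_mem _ hm)
    have hkt : k ∉ t := (List.nodup_cons.mp hnd).1
    have hndt := (List.nodup_cons.mp hnd).2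
    have hupB : upAt k (Bvec ν lam s t) := upAt_Bvec ν hkt lam hsk
    show (Pl ν (k :: t) μ 1 0).mulVec
        (aW lam (ν k) • Bvec ν lam s t + bprodL ν t lam • basisVec (Function.update s k 1)) = _
    rw [Matrix.mulVec_add, Matrix.mulVec_smul, Matrix.mulVec_smul]
    -- first part: C_{k::t} on Bvec t
    have h1 : (Pl ν (k :: t) μ 1 0).mulVec (Bvec ν lam s t) =
        bW μ (ν k) • (Sval ν lam μ t • basisVec s) := by
      have hupP0 : upAt k ((Pl ν t μ 0 0).mulVec (Bvec ν lam s t)) := upAt_Pl ν hkt μ hupB 0 0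
      have hupP1 : upAt k ((Pl ν t μ 1 0).mulVec (Bvec ν lam s t)) := upAt_Pl ν hkt μ hupB 1 0
      rw [Pl_cons_mulVec, L10_mulVec ν μ hupP0, zero_add, L11_mulVec ν μ hupP1, ih hndt hst]
    have h2 : (Pl ν (k :: t) μ 1 0).mulVec (basisVec (Function.update s k 1)) =
        cb ν k μ (k :: t) • basisVec s :=
      C_flip ν (k :: t) μ hnd ((List.mem_cons_self (a := k) (l := t))) hs
    rw [h1, h2, Sval]
    rw [show cb ν k μ (k :: t) = aprodL ν t μ from by rw [cb]; simp]
    rw [smul_smul, smul_smul, smul_smul, ← add_smul, mul_assoc]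

lemma Sval_eq (l : List (Fin N)) (lam : ℂ) :
    Sval ν lam (lam + 1) l =
      (l.map fun k => aW lam (ν k) * aW lam (ν k)).prod
        - (l.map fun k => bW lam (ν k) * aW (lam + 1) (ν k)).prod := by
  induction l with
  | nil => simp [Sval]
  | cons k t ih =>
    rw [Sval, ih, List.map_cons, List.map_cons, List.prod_cons, List.prod_cons]
    have ha : (t.map fun m => bW lam (ν m) * aW (lam+1) (ν m)).prod
        = bprodL ν t lam * aprodL ν t (lam+1) := by
      rw [bprodL, aprodL, ← List.prod_map_mul]
    rw [ha]
    unfold aW bW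
    ring

lemma list_prod_eq (f : Fin N → ℂ) :
    (((List.finRange N).reverse).map f).prod = ∏ k, f k := by
  rw [List.map_reverse, List.prod_reverse, ← Fin.prod_univ_def]

end SixVertexAux
end

open SixVertexAux

open SixVertex in
/-- `C(ν_j) B(ν_j - 1) |⇑⟩ = - a(ν_j) d(ν_j - 1) |⇑⟩`, where
`a(λ) = ∏_{k=1}^N (λ - ν_k + 1)` and `d(λ) = ∏_{k=1}^N (λ - ν_k)`. -/
theorem Cop_Bop_vacuum (N : ℕ) (hN : 1 ≤ N) (ν : Fin N → ℂ) (j : Fin N) :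
    (Cop ν (ν j)).mulVec ((Bop ν (ν j - 1)).mulVec (upVec N)) =
      (-((∏ k, (ν j - ν k + 1)) * ∏ k, (ν j - 1 - ν k))) • upVec N := by
  classical
  set l : List (Fin N) := (List.finRange N).reverse with hl
  have hnd : l.Nodup := List.nodup_reverse.mpr (List.nodup_finRange N)
  have hs : ∀ k ∈ l, upCfg N k = 0 := fun _ _ => rfl
  have hB : (Bop ν (ν j - 1)).mulVec (upVec N) = Bvec ν (ν j - 1) (upCfg N) l :=
    (BD_up ν l (ν j - 1) hnd hs).1
  have hC := key ν l (ν j - 1) (ν j) hnd hs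
  have hCop : Cop ν (ν j) = Pl ν l (ν j) 1 0 := rfl
  rw [hCop, hB, hC]
  have hS := Sval_eq ν l (ν j - 1)
  rw [show (ν j - 1) + 1 = ν j from by ring] at hS
  have h1 : ((l.map fun k => aW (ν j - 1) (ν k) * aW (ν j - 1) (ν k)).prod) = 0 := by
    rw [list_prod_eq]
    refine Finset.prod_eq_zero (Finset.mem_univ j) ?_
    have : aW (ν j - 1) (ν j) = 0 := by unfold aW; ring
    rw [this, zero_mul]
  have h2 : ((l.map fun k => bW (ν j - 1) (ν k) * aW (ν j) (ν k)).prod) =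
      (∏ k, (ν j - 1 - ν k)) * ∏ k, (ν j - ν k + 1) := by
    rw [list_prod_eq, Finset.prod_mul_distrib]
    rfl
  rw [hS, h1, h2]
  show _ • basisVec (upCfg N) = _ • basisVec (upCfg N)
  congr 1
  ring
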